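/- arXiv:1602.00435 — 2 statements merged into one kernel-verified Lean document; each statement's English description precedes it below -/
import Mathlib

section
/- Let A, B, C' be matrices over a field (or an integral domain) such that row i of C' differs from row i of the product A·B in at least one entry. If v is a uniformly random vector in {0,1}^r (coordinates chosen independently and uniformly), then the probability that the i-th coordinate of C'·v equals the i-th coordinate of A·(B·v) is at most 1/2. -/
open Classical in
/-- Freivalds' test: if row `i` of `C'` differs from row `i` of `A*B`, a uniform
random 0/1 vector `v` detects this with probability at least `1/2`; equivalently,
the number of vectors `v ∈ {0,1}^r` for which the test passes at coordinate `i`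
is at most half of all `2^r` vectors. -/
theorem stmt_2 {F : Type*} [Field F] {p q r : ℕ}
    (A : Matrix (Fin p) (Fin q) F) (B : Matrix (Fin q) (Fin r) F)
    (C' : Matrix (Fin p) (Fin r) F) (i : Fin p)
    (hrow : C' i ≠ (A * B) i) :
    2 * (Finset.univ.filter (fun v : Fin r → Fin 2 =>
        C'.mulVec (fun j => ((v j : ℕ) : F)) i
          = A.mulVec (B.mulVec (fun j => ((v j : ℕ) : F))) i)).card
      ≤ Fintype.card (Fin r → Fin 2) := by
  classical
  obtain ⟨k, hk⟩ := Function.ne_iff.mp hrow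
  set d : Fin r → F := fun j => C' i j - (A * B) i j with hd
  have hdk : d k ≠ 0 := sub_ne_zero.mpr hk
  set w : (Fin r → Fin 2) → (Fin r → F) := fun v j => ((v j : ℕ) : F) with hw
  set P : (Fin r → Fin 2) → Prop := fun v =>
    C'.mulVec (fun j => ((v j : ℕ) : F)) i
      = A.mulVec (B.mulVec (fun j => ((v j : ℕ) : F))) i with hP
  have hPiff : ∀ v, P v ↔ ∑ j, d j * w v j = 0 := by
    intro v
    rw [hP]
    simp only
    rw [show A.mulVec (B.mulVec (fun j => ((v j : ℕ) : F))) i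
        = (A * B).mulVec (fun j => ((v j : ℕ) : F)) i by
      rw [Matrix.mulVec_mulVec]]
    simp only [Matrix.mulVec, dotProduct, hd, hw, sub_mul,
      Finset.sum_sub_distrib, sub_eq_zero]
  set flip : (Fin r → Fin 2) → (Fin r → Fin 2) :=
    fun v => Function.update v k (1 - v k) with hflip
  have hcast : ∀ x : Fin 2, (((1 - x : Fin 2) : ℕ) : F) = 1 - ((x : ℕ) : F) := by
    intro x; fin_cases x <;> simp
  have hflipsum : ∀ v, ∑ j, d j * w (flip v) j
      = (∑ j, d j * w v j) + d k * (1 - 2 * w v k) := by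
    intro v
    have key : ∀ j, d j * w (flip v) j
        = d j * w v j + (if j = k then d k * (1 - 2 * w v k) else 0) := by
      intro j
      by_cases hj : j = k
      · subst hj
        rw [if_pos rfl]
        simp only [hflip, hw, Function.update_self, hcast]
        ring
      · simp only [hflip, hw, Function.update_of_ne hj, if_neg hj, add_zero]
    rw [Finset.sum_congr rfl (fun j _ => key j), Finset.sum_add_distrib,
      Finset.sum_ite_eq' Finset.univ k]
    simp
  have hflipflip : ∀ v, flip (flip v) = v := by
    intro v
    funext j
    by_cases hj : j = k
    · subst hj
      simp only [hflip, Function.update_self]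
      have h11 : ∀ x : Fin 2, 1 - (1 - x) = x := by decide
      rw [h11]
    · simp [hflip, Function.update_of_ne hj]
  have hval : ∀ v : Fin r → Fin 2, w v k = 0 ∨ w v k = 1 := by
    intro v
    rcases (by decide : ∀ x : Fin 2, x = 0 ∨ x = 1) (v k) with h | h <;>
      rw [hw] <;> simp [h]
  have hmaps : ∀ v, P v → ¬ P (flip v) := by
    intro v hv hfv
    rw [hPiff] at hv hfv
    rw [hflipsum, hv, zero_add] at hfv
    rcases mul_eq_zero.mp hfv with h | h
    · exact hdk h
    · rcases hval v with h2 | h2 <;> rw [h2] at h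
      · simp at h
      · rw [mul_one] at h
        have h1 : (1 : F) = 0 := by linear_combination -h
        exact one_ne_zero h1
  set S := Finset.univ.filter P with hS
  set T := Finset.univ.filter (fun v => ¬ P v) with hT
  have hcard : S.card ≤ T.card := by
    apply Finset.card_le_card_of_injOn flip
    · intro v hv
      rw [hS, Finset.mem_coe, Finset.mem_filter] at hv
      rw [hT, Finset.mem_coe, Finset.mem_filter]
      exact ⟨Finset.mem_univ _, hmaps v hv.2⟩
    · intro a _ b _ hab
      have := congrArg flip hab
      rwa [hflipflip, hflipflip] at this
  have htot : S.card + T.card = Fintype.card (Fin r → Fin 2) := by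
    rw [hS, hT, Finset.card_filter_add_card_filter_not, Finset.card_univ]
  have hfin : 2 * S.card ≤ Fintype.card (Fin r → Fin 2) := by omega
  convert hfin using 3
end

section
/- Let P be a set of ℓ distinct indices from {1,…,n}, and let Q be any set of primes with |Q| > ℓ·(ℓ−1)·log₂ n. Then for every i ∈ P there exists a prime p ∈ Q such that for all j ∈ P with j ≠ i, i mod p ≠ j mod p. -/
theorem stmt_7 (n : ℕ) (P : Finset ℕ) (hP : P ⊆ Finset.Icc 1 n)
    (Q : Finset ℕ) (hQprime : ∀ p ∈ Q, p.Prime)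
    (hQcard : (P.card : ℝ) * ((P.card : ℝ) - 1) * Real.logb 2 n < (Q.card : ℝ)) :
    ∀ i ∈ P, ∃ p ∈ Q, ∀ j ∈ P, j ≠ i → i % p ≠ j % p := by
  intro i hi
  have hiIcc := hP hi
  rw [Finset.mem_Icc] at hiIcc
  have hn1 : 1 ≤ n := le_trans hiIcc.1 hiIcc.2
  have hlogn : 0 ≤ Real.logb 2 n :=
    Real.logb_nonneg (by norm_num) (by exact_mod_cast hn1)
  set Bad := (P.erase i).biUnion (fun j => Q.filter (fun p => i % p = j % p)) with hBad
  have hBadsub : Bad ⊆ Q := by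
    intro p hp
    simp only [hBad, Finset.mem_biUnion, Finset.mem_filter] at hp
    obtain ⟨j, _, hpQ, _⟩ := hp
    exact hpQ
  have hper : ∀ j ∈ P.erase i,
      ((Q.filter (fun p => i % p = j % p)).card : ℝ) ≤ Real.logb 2 n := by
    intro j hj
    have hji : j ≠ i := Finset.ne_of_mem_erase hj
    have hjP : j ∈ P := Finset.mem_of_mem_erase hj
    have hjIcc := hP hjP
    rw [Finset.mem_Icc] at hjIcc
    set d := ((j:ℤ) - i).natAbs with hd
    have hd0 : d ≠ 0 := by
      simp only [hd, Int.natAbs_ne_zero, sub_ne_zero]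
      exact_mod_cast hji
    have hdn : d ≤ n := by
      rw [hd]; omega
    have hsub : Q.filter (fun p => i % p = j % p) ⊆ d.primeFactors := by
      intro p hp
      rw [Finset.mem_filter] at hp
      obtain ⟨hpQ, hmod⟩ := hp
      have hpp := hQprime p hpQ
      have hdvd : p ∣ d := by
        have h1 : (p:ℤ) ∣ (j:ℤ) - i := (Nat.modEq_iff_dvd).mp hmod
        simpa using Int.natAbs_dvd_natAbs.mpr h1
      exact Nat.mem_primeFactors.mpr ⟨hpp, hdvd, hd0⟩
    have hpow : 2 ^ d.primeFactors.card ≤ d :=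
      calc 2 ^ d.primeFactors.card ≤ ∏ p ∈ d.primeFactors, p :=
            Finset.pow_card_le_prod _ _ _
              (fun p hp => (Nat.prime_of_mem_primeFactors hp).two_le)
        _ ≤ d := Nat.le_of_dvd (Nat.pos_of_ne_zero hd0) (Nat.prod_primeFactors_dvd d)
    calc ((Q.filter (fun p => i % p = j % p)).card : ℝ)
        ≤ (d.primeFactors.card : ℝ) := by exact_mod_cast Finset.card_le_card hsub
      _ = Real.logb 2 ((2:ℝ) ^ d.primeFactors.card) := by
          rw [Real.logb_pow, Real.logb_self_eq_one (by norm_num : (1:ℝ) < 2), mul_one]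
      _ ≤ Real.logb 2 n := by
          apply Real.logb_le_logb_of_le (by norm_num : (1:ℝ) < 2)
            (by positivity)
          calc (2:ℝ) ^ d.primeFactors.card ≤ (d:ℝ) := by exact_mod_cast hpow
            _ ≤ (n:ℝ) := by exact_mod_cast hdn
  have hBadcard : (Bad.card : ℝ) < (Q.card : ℝ) := by
    have h1 : (Bad.card : ℝ) ≤ ((P.erase i).card : ℝ) * Real.logb 2 n := by
      calc (Bad.card : ℝ)
          ≤ ∑ j ∈ P.erase i, ((Q.filter (fun p => i % p = j % p)).card : ℝ) := by
            exact_mod_cast Finset.card_biUnion_le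
        _ ≤ ∑ _j ∈ P.erase i, Real.logb 2 n := Finset.sum_le_sum hper
        _ = ((P.erase i).card : ℝ) * Real.logb 2 n := by
            rw [Finset.sum_const, nsmul_eq_mul]
    have hP1 : 1 ≤ P.card := Finset.card_pos.mpr ⟨i, hi⟩
    have hcarderase : ((P.erase i).card : ℝ) = (P.card : ℝ) - 1 := by
      rw [Finset.card_erase_of_mem hi]
      push_cast [hP1]
      ring
    have h2 : ((P.card : ℝ) - 1) * Real.logb 2 n ≤
        (P.card : ℝ) * ((P.card : ℝ) - 1) * Real.logb 2 n := by
      have hP1' : (1:ℝ) ≤ (P.card : ℝ) := by exact_mod_cast hP1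
      nlinarith
    rw [hcarderase] at h1
    linarith
  have hne : (Q \ Bad).Nonempty := by
    rw [← Finset.card_pos, Finset.card_sdiff_of_subset hBadsub]
    have : Bad.card < Q.card := by exact_mod_cast hBadcard
    omega
  obtain ⟨p, hp⟩ := hne
  rw [Finset.mem_sdiff] at hp
  refine ⟨p, hp.1, fun j hjP hji hmod => hp.2 ?_⟩
  simp only [hBad, Finset.mem_biUnion, Finset.mem_filter]
  exact ⟨j, Finset.mem_erase.mpr ⟨hji, hjP⟩, hp.1, hmod⟩
end
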